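/- The trilinear forms GHZ and W on ℂ² × ℂ² × ℂ² are not equivalent: there is no triple (α₂, α₁, α₀) of invertible linear maps on ℂ² and nonzero scalar λ such that λ·⟨GHZ|x,y,z⟩ = ⟨W|α₂x, α₁y, α₀z⟩ for all x, y, z. -/
import Mathlib


/-- The GHZ state as a trilinear form: `⟨GHZ|x,y,z⟩ = (√2/2)(x₀y₀z₀ + x₁y₁z₁)`. -/
noncomputable def GHZform (x y z : Fin 2 → ℂ) : ℂ :=
  ((Real.sqrt 2 : ℝ) : ℂ) / 2 * (x 0 * y 0 * z 0 + x 1 * y 1 * z 1)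

/-- The W state as a trilinear form: `⟨W|x,y,z⟩ = (√3/3)(x₁y₀z₀ + x₀y₁z₀ + x₀y₀z₁)`. -/
noncomputable def Wform (x y z : Fin 2 → ℂ) : ℂ :=
  ((Real.sqrt 3 : ℝ) : ℂ) / 3 * (x 1 * y 0 * z 0 + x 0 * y 1 * z 0 + x 0 * y 0 * z 1)

/-- Determinant factorization for slices of the W form. -/
lemma Wform_det (u a b p q : Fin 2 → ℂ) :
    Wform u a p * Wform u b q - Wform u a q * Wform u b p
      = -(1/3) * (a 0 * b 1 - a 1 * b 0) * (p 0 * q 1 - p 1 * q 0) * (u 0)^2 := by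
  have h3 : ((Real.sqrt 3 : ℝ) : ℂ)^2 = 3 := by
    norm_cast
    rw [Real.sq_sqrt] <;> norm_num
  simp only [Wform]
  linear_combination (-(a 0 * b 1 - a 1 * b 0) * (p 0 * q 1 - p 1 * q 0) * (u 0)^2 / 9) * h3

/-- GHZ and W are inequivalent: there is no triple of invertible
linear maps on `ℂ²` and nonzero scalar `λ` with
`λ·⟨GHZ|x,y,z⟩ = ⟨W|α₂x, α₁y, α₀z⟩` for all `x, y, z`. -/
theorem GHZ_not_equivalent_W :
    ¬ ∃ (α₂ α₁ α₀ : (Fin 2 → ℂ) ≃ₗ[ℂ] (Fin 2 → ℂ)) (lam : ℂ), lam ≠ 0 ∧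
      ∀ x y z : Fin 2 → ℂ, lam * GHZform x y z = Wform (α₂ x) (α₁ y) (α₀ z) := by
  rintro ⟨α₂, α₁, α₀, lam, hlam, h⟩
  have h2 : ((Real.sqrt 2 : ℝ) : ℂ)^2 = 2 := by
    norm_cast
    rw [Real.sq_sqrt] <;> norm_num
  set e0 : Fin 2 → ℂ := ![1, 0] with he0
  set e1 : Fin 2 → ℂ := ![0, 1] with he1
  set A := (α₁ e0 0 * α₁ e1 1 - α₁ e0 1 * α₁ e1 0) with hA
  set B := (α₀ e0 0 * α₀ e1 1 - α₀ e0 1 * α₀ e1 0) with hB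
  set C := -(1/3) * A * B with hC
  -- main determinant identity for the GHZ slices
  have main : ∀ x : Fin 2 → ℂ,
      lam^2 * (1/2) * (x 0 * x 1) = C * ((α₂ x) 0)^2 := by
    intro x
    have key := Wform_det (α₂ x) (α₁ e0) (α₁ e1) (α₀ e0) (α₀ e1)
    rw [← h x e0 e0, ← h x e1 e1, ← h x e0 e1, ← h x e1 e0] at key
    simp only [GHZform, he0, he1, Matrix.cons_val_zero, Matrix.cons_val_one,
      Matrix.head_cons] at key
    rw [hC, hA, hB]
    simp only [he0, he1]
    linear_combination key - (lam^2 * (x 0 * x 1) / 4) * h2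
  have p0 := main e0
  have p1 := main e1
  have p01 := main (e0 + e1)
  simp only [he0, he1, Matrix.cons_val_zero, Matrix.cons_val_one, Matrix.head_cons,
    Pi.add_apply, map_add, mul_zero, zero_mul, mul_one, one_mul, add_zero, zero_add] at p0 p1 p01
  -- p0 : 0 = C * (α₂ e0 0)^2, p1 : 0 = C * (α₂ e1 0)^2
  -- p01 : lam^2 * (1/2) = C * (α₂ e0 0 + α₂ e1 0)^2
  have hlam2 : lam^2 * (1/2) ≠ 0 := by
    simp [pow_eq_zero_iff, hlam]
  by_cases hCz : C = 0
  · rw [hCz, zero_mul] at p01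
    exact hlam2 p01
  · have ha : (α₂ e0) 0 = 0 := by
      have := (mul_eq_zero.mp p0.symm).resolve_left hCz
      exact pow_eq_zero_iff (n := 2) (by norm_num) |>.mp this
    have hb : (α₂ e1) 0 = 0 := by
      have := (mul_eq_zero.mp p1.symm).resolve_left hCz
      exact pow_eq_zero_iff (n := 2) (by norm_num) |>.mp this
    rw [ha, hb] at p01
    simp at p01
    exact hlam2 (by simpa using p01)
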